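/- Let R > 4 and Λ ≥ 2, and let f : [0, ∞) → (0, ∞)^{L_R*} be a solution of the discrete near-resonance acoustic kinetic system with broadening Λ, with strictly positive values. Then f exits every compact set: for every compact K ⊂ (0, ∞)^{L_R*}, the set {t ≥ 0 : f(t) ∈ K} is bounded. -/

import Mathlib

open scoped BigOperators Classical

/-- Euclidean norm of a point of the integer lattice `ℤ³`. -/
noncomputable def enorm3 (p : Fin 3 → ℤ) : ℝ := Real.sqrt (∑ i, ((p i : ℝ))^2)

/-- The truncated lattice `L_R* = {p ∈ ℤ³ : 0 < |p| < R}` (as a finite set). -/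
noncomputable def latticeBall (R : ℝ) : Finset (Fin 3 → ℤ) :=
  (Finset.Icc (fun _ => (-⌈R⌉ : ℤ)) (fun _ => (⌈R⌉ : ℤ))).filter
    (fun p => 0 < enorm3 p ∧ enorm3 p < R)

/-- Right-hand side of the discrete exact-resonance acoustic wave kinetic system, with
kernel `V_{p₁,p₂,p₃} = |p₁||p₂||p₃|` and phonon dispersion `ω(p) = |p|`. -/
noncomputable def Qres (R : ℝ) (f : (Fin 3 → ℤ) → ℝ) (p1 : Fin 3 → ℤ) : ℝ :=
  (∑ p2 ∈ latticeBall R, ∑ p3 ∈ latticeBall R,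
      if p1 = p2 + p3 ∧ enorm3 p1 = enorm3 p2 + enorm3 p3 then
        enorm3 p1 * enorm3 p2 * enorm3 p3 *
          (f p2 * f p3 - f p1 * (f p2 + f p3)) else 0)
  - 2 * ∑ p2 ∈ latticeBall R, ∑ p3 ∈ latticeBall R,
      if p3 = p1 + p2 ∧ enorm3 p3 = enorm3 p1 + enorm3 p2 then
        enorm3 p1 * enorm3 p2 * enorm3 p3 *
          (f p1 * f p2 - f p3 * (f p1 + f p2)) else 0

/-- Right-hand side of the discrete near-resonance acoustic wave kinetic system with
resonance broadening `Λ`. -/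
noncomputable def QNR (R Λ : ℝ) (f : (Fin 3 → ℤ) → ℝ) (p1 : Fin 3 → ℤ) : ℝ :=
  (∑ p2 ∈ latticeBall R, ∑ p3 ∈ latticeBall R,
      if p1 = p2 + p3 ∧ |enorm3 p1 - enorm3 p2 - enorm3 p3| ≤ Λ then
        enorm3 p1 * enorm3 p2 * enorm3 p3 *
          (f p2 * f p3 - f p1 * (f p2 + f p3)) else 0)
  - 2 * ∑ p2 ∈ latticeBall R, ∑ p3 ∈ latticeBall R,
      if p3 = p1 + p2 ∧ |enorm3 p3 - enorm3 p1 - enorm3 p2| ≤ Λ then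
        enorm3 p1 * enorm3 p2 * enorm3 p3 *
          (f p1 * f p2 - f p3 * (f p1 + f p2)) else 0

namespace ExitsAux

/-- quadratic bracket -/
noncomputable def Bq (g : (Fin 3 → ℤ) → ℝ) (a b c : Fin 3 → ℤ) : ℝ :=
  g b * g c - g a * (g b + g c)

def rescond (Λ : ℝ) (a b c : Fin 3 → ℤ) : Prop :=
  a = b + c ∧ |enorm3 a - enorm3 b - enorm3 c| ≤ Λ

noncomputable def Vk (a b c : Fin 3 → ℤ) : ℝ := enorm3 a * enorm3 b * enorm3 c

noncomputable def Wterm (Λ : ℝ) (g : (Fin 3 → ℤ) → ℝ) (a b c : Fin 3 → ℤ) : ℝ :=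
  if rescond Λ a b c then Vk a b c * (Bq g a b c)^2 / (g a * g b * g c) else 0

lemma rescond_symm {Λ : ℝ} {a b c : Fin 3 → ℤ} (h : rescond Λ a c b) : rescond Λ a b c := by
  obtain ⟨h1, h2⟩ := h
  refine ⟨by rw [h1, add_comm], ?_⟩
  have : enorm3 a - enorm3 b - enorm3 c = enorm3 a - enorm3 c - enorm3 b := by ring
  rw [this]; exact h2

lemma enorm3_nonneg (p : Fin 3 → ℤ) : 0 ≤ enorm3 p := Real.sqrt_nonneg _

lemma Vk_nonneg (a b c : Fin 3 → ℤ) : 0 ≤ Vk a b c :=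
  mul_nonneg (mul_nonneg (enorm3_nonneg a) (enorm3_nonneg b)) (enorm3_nonneg c)

lemma Wterm_nonneg {Λ : ℝ} {g : (Fin 3 → ℤ) → ℝ} {a b c : Fin 3 → ℤ}
    (ha : 0 ≤ g a) (hb : 0 ≤ g b) (hc : 0 ≤ g c) : 0 ≤ Wterm Λ g a b c := by
  unfold Wterm
  split_ifs with h
  · exact div_nonneg (mul_nonneg (Vk_nonneg a b c) (sq_nonneg _))
      (mul_nonneg (mul_nonneg ha hb) hc)
  · exact le_refl 0

section Identity
variable (R Λ : ℝ) (g : (Fin 3 → ℤ) → ℝ)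

lemma step0 (p : Fin 3 → ℤ) :
    QNR R Λ g p / g p =
      (∑ b ∈ latticeBall R, ∑ c ∈ latticeBall R,
        if rescond Λ p b c then Vk p b c * Bq g p b c * (g p)⁻¹ else 0)
      - 2 * (∑ b ∈ latticeBall R, ∑ c ∈ latticeBall R,
        if rescond Λ c p b then Vk c p b * Bq g c p b * (g p)⁻¹ else 0) := by
  unfold QNR
  rw [sub_div, mul_div_assoc]
  congr 1
  · rw [Finset.sum_div]
    refine Finset.sum_congr rfl fun b _ => ?_
    rw [Finset.sum_div]
    refine Finset.sum_congr rfl fun c _ => ?_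
    unfold rescond Vk Bq
    split_ifs with h
    · rw [div_eq_mul_inv]
    · exact zero_div _
  · congr 1
    rw [Finset.sum_div]
    refine Finset.sum_congr rfl fun b _ => ?_
    rw [Finset.sum_div]
    refine Finset.sum_congr rfl fun c _ => ?_
    unfold rescond Vk Bq
    split_ifs with h
    · rw [div_eq_mul_inv]; ring
    · exact zero_div _

lemma claim2 :
    (∑ p ∈ latticeBall R, ∑ b ∈ latticeBall R, ∑ c ∈ latticeBall R,
      if rescond Λ c p b then Vk c p b * Bq g c p b * (g p)⁻¹ else 0)
    = ∑ a ∈ latticeBall R, ∑ b ∈ latticeBall R, ∑ c ∈ latticeBall R,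
        if rescond Λ a b c then Vk a b c * Bq g a b c * (g b)⁻¹ else 0 := by
  have h1 : (∑ p ∈ latticeBall R, ∑ b ∈ latticeBall R, ∑ c ∈ latticeBall R,
      if rescond Λ c p b then Vk c p b * Bq g c p b * (g p)⁻¹ else 0)
      = ∑ p ∈ latticeBall R, ∑ c ∈ latticeBall R, ∑ b ∈ latticeBall R,
      if rescond Λ c p b then Vk c p b * Bq g c p b * (g p)⁻¹ else 0 :=
    Finset.sum_congr rfl fun p _ => Finset.sum_comm
  rw [h1, Finset.sum_comm]

lemma claim3 :
    (∑ a ∈ latticeBall R, ∑ b ∈ latticeBall R, ∑ c ∈ latticeBall R,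
        if rescond Λ a b c then Vk a b c * Bq g a b c * (g b)⁻¹ else 0)
    = ∑ a ∈ latticeBall R, ∑ b ∈ latticeBall R, ∑ c ∈ latticeBall R,
        if rescond Λ a b c then Vk a b c * Bq g a b c * (g c)⁻¹ else 0 := by
  refine Finset.sum_congr rfl fun a _ => ?_
  rw [Finset.sum_comm]
  refine Finset.sum_congr rfl fun b _ => Finset.sum_congr rfl fun c _ => ?_
  by_cases h : rescond Λ a b c
  · rw [if_pos h, if_pos (rescond_symm h)]
    unfold Vk Bq; ring
  · rw [if_neg h, if_neg (fun h' => h (rescond_symm h'))]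

lemma sum_QNR_div (hg : ∀ p ∈ latticeBall R, g p ≠ 0) :
    ∑ p ∈ latticeBall R, QNR R Λ g p / g p
      = ∑ a ∈ latticeBall R, ∑ b ∈ latticeBall R, ∑ c ∈ latticeBall R,
          Wterm Λ g a b c := by
  have e1 : ∑ p ∈ latticeBall R, QNR R Λ g p / g p =
      (∑ a ∈ latticeBall R, ∑ b ∈ latticeBall R, ∑ c ∈ latticeBall R,
        if rescond Λ a b c then Vk a b c * Bq g a b c * (g a)⁻¹ else 0)
      - (∑ a ∈ latticeBall R, ∑ b ∈ latticeBall R, ∑ c ∈ latticeBall R,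
        if rescond Λ a b c then Vk a b c * Bq g a b c * (g b)⁻¹ else 0)
      - (∑ a ∈ latticeBall R, ∑ b ∈ latticeBall R, ∑ c ∈ latticeBall R,
        if rescond Λ a b c then Vk a b c * Bq g a b c * (g c)⁻¹ else 0) := by
    simp only [step0 R Λ g]
    rw [Finset.sum_sub_distrib, ← Finset.mul_sum, claim2 R Λ g, ← claim3 R Λ g]
    ring
  rw [e1, ← Finset.sum_sub_distrib, ← Finset.sum_sub_distrib]
  refine Finset.sum_congr rfl fun a ha => ?_
  rw [← Finset.sum_sub_distrib, ← Finset.sum_sub_distrib]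
  refine Finset.sum_congr rfl fun b hb => ?_
  rw [← Finset.sum_sub_distrib, ← Finset.sum_sub_distrib]
  refine Finset.sum_congr rfl fun c hc => ?_
  unfold Wterm
  by_cases h : rescond Λ a b c
  · rw [if_pos h, if_pos h, if_pos h, if_pos h]
    have ha' := hg a ha
    have hb' := hg b hb
    have hc' := hg c hc
    unfold Vk Bq
    field_simp
    ring
  · simp [h]

end Identity

section Vectors

def v1 : Fin 3 → ℤ := ![1, 0, 0]
def v2 : Fin 3 → ℤ := ![2, 0, 0]
def w1 : Fin 3 → ℤ := ![-1, 0, 0]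

lemma enorm3_v1 : enorm3 v1 = 1 := by
  unfold enorm3 v1
  rw [Fin.sum_univ_three]
  norm_num
  rfl

lemma enorm3_w1 : enorm3 w1 = 1 := by
  unfold enorm3 w1
  rw [Fin.sum_univ_three]
  norm_num
  rfl

lemma enorm3_v2 : enorm3 v2 = 2 := by
  unfold enorm3 v2
  rw [Fin.sum_univ_three]
  norm_num
  rw [show ((![2, 0, 0] : Fin 3 → ℤ) 2) = 0 from rfl]
  norm_num

lemma mem_latticeBall {R : ℝ} (hR : 4 < R) (p : Fin 3 → ℤ)
    (hp : ∀ i, -4 ≤ p i ∧ p i ≤ 4) (h0 : 0 < enorm3 p) (hlt : enorm3 p < R) :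
    p ∈ latticeBall R := by
  have hceil : (4 : ℤ) ≤ ⌈R⌉ := by
    have := Int.le_ceil R
    exact_mod_cast le_of_lt (by exact_mod_cast (lt_of_lt_of_le hR this) : (4:ℝ) < (⌈R⌉:ℝ))
  refine Finset.mem_filter.mpr ⟨Finset.mem_Icc.mpr ⟨?_, ?_⟩, h0, hlt⟩
  · intro i
    show -⌈R⌉ ≤ p i
    have := (hp i).1; omega
  · intro i
    show p i ≤ ⌈R⌉
    have := (hp i).2; omega

lemma v1_mem {R : ℝ} (hR : 4 < R) : v1 ∈ latticeBall R := by
  refine mem_latticeBall hR _ (by decide) (by rw [enorm3_v1]; norm_num)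
    (by rw [enorm3_v1]; linarith)

lemma w1_mem {R : ℝ} (hR : 4 < R) : w1 ∈ latticeBall R := by
  refine mem_latticeBall hR _ (by decide) (by rw [enorm3_w1]; norm_num)
    (by rw [enorm3_w1]; linarith)

lemma v2_mem {R : ℝ} (hR : 4 < R) : v2 ∈ latticeBall R := by
  refine mem_latticeBall hR _ (by decide) (by rw [enorm3_v2]; norm_num)
    (by rw [enorm3_v2]; linarith)

lemma rescond1 {Λ : ℝ} (hΛ : 2 ≤ Λ) : rescond Λ v2 v1 v1 := by
  constructor
  · funext i; fin_cases i <;> simp [v1, v2]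
  · rw [enorm3_v1, enorm3_v2, show (2:ℝ) - 1 - 1 = 0 by ring, abs_zero]
    linarith

lemma rescond2 {Λ : ℝ} (hΛ : 2 ≤ Λ) : rescond Λ v1 v2 w1 := by
  constructor
  · funext i; fin_cases i <;> simp [v1, v2, w1]
  · rw [enorm3_v1, enorm3_v2, enorm3_w1]
    rw [show (1:ℝ) - 2 - 1 = -2 by ring, abs_neg, abs_two]
    linarith

lemma v1_ne_v2 : v1 ≠ v2 := by
  intro h
  have := congrFun h 0
  simp [v1, v2] at this

lemma key_pos {Λ : ℝ} (hΛ : 2 ≤ Λ) (g : (Fin 3 → ℤ) → ℝ)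
    (h1 : 0 < g v1) (h2 : 0 < g v2) (h3 : 0 < g w1) :
    0 < Wterm Λ g v2 v1 v1 + Wterm Λ g v1 v2 w1 := by
  unfold Wterm
  rw [if_pos (rescond1 hΛ), if_pos (rescond2 hΛ)]
  have hV2 : (0:ℝ) < Vk v2 v1 v1 := by
    unfold Vk; rw [enorm3_v1, enorm3_v2]; norm_num
  have hV1 : (0:ℝ) < Vk v1 v2 w1 := by
    unfold Vk; rw [enorm3_v1, enorm3_v2, enorm3_w1]; norm_num
  by_cases hB : Bq g v2 v1 v1 = 0
  · have hB2 : Bq g v1 v2 w1 ≠ 0 := by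
      unfold Bq at hB ⊢
      intro hB2
      have hfac : (g v1) * (g v1 - 2 * g v2) = 0 := by linear_combination hB
      rcases mul_eq_zero.mp hfac with h | h
      · exact absurd h h1.ne'
      · have h12 : g v1 = 2 * g v2 := by linarith
        rw [h12] at hB2
        nlinarith [mul_pos h2 h3, mul_pos h2 h2]
    have t1 : (0:ℝ) ≤ Vk v2 v1 v1 * Bq g v2 v1 v1 ^ 2 / (g v2 * g v1 * g v1) :=
      div_nonneg (mul_nonneg hV2.le (sq_nonneg _)) (by positivity)
    have t2 : (0:ℝ) < Vk v1 v2 w1 * Bq g v1 v2 w1 ^ 2 / (g v1 * g v2 * g w1) :=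
      div_pos (mul_pos hV1 (by positivity)) (by positivity)
    linarith
  · have t1 : (0:ℝ) < Vk v2 v1 v1 * Bq g v2 v1 v1 ^ 2 / (g v2 * g v1 * g v1) :=
      div_pos (mul_pos hV2 (by positivity)) (by positivity)
    have t2 : (0:ℝ) ≤ Vk v1 v2 w1 * Bq g v1 v2 w1 ^ 2 / (g v1 * g v2 * g w1) :=
      div_nonneg (mul_nonneg hV1.le (sq_nonneg _)) (by positivity)
    linarith

end Vectors

section Pos

lemma triple_sum_pos {R Λ : ℝ} (hR : 4 < R) (hΛ : 2 ≤ Λ) (g : (Fin 3 → ℤ) → ℝ)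
    (hg : ∀ p ∈ latticeBall R, 0 < g p) :
    0 < ∑ a ∈ latticeBall R, ∑ b ∈ latticeBall R, ∑ c ∈ latticeBall R,
        Wterm Λ g a b c := by
  have hW : ∀ a ∈ latticeBall R, ∀ b ∈ latticeBall R, ∀ c ∈ latticeBall R,
      0 ≤ Wterm Λ g a b c := fun a ha b hb c hc =>
    Wterm_nonneg (hg a ha).le (hg b hb).le (hg c hc).le
  set F : (Fin 3 → ℤ) → ℝ := fun a => ∑ b ∈ latticeBall R, ∑ c ∈ latticeBall R,
      Wterm Λ g a b c with hF
  have hFnn : ∀ a ∈ latticeBall R, 0 ≤ F a := fun a ha =>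
    Finset.sum_nonneg fun b hb => Finset.sum_nonneg fun c hc => hW a ha b hb c hc
  have hsub : ({v2, v1} : Finset (Fin 3 → ℤ)) ⊆ latticeBall R := by
    intro x hx
    rcases Finset.mem_insert.mp hx with rfl | hx
    · exact v2_mem hR
    · rw [Finset.mem_singleton.mp hx]; exact v1_mem hR
  have hpair : ∑ a ∈ ({v2, v1} : Finset (Fin 3 → ℤ)), F a ≤ ∑ a ∈ latticeBall R, F a :=
    Finset.sum_le_sum_of_subset_of_nonneg hsub fun a ha _ => hFnn a ha
  rw [Finset.sum_pair (fun h => v1_ne_v2 h.symm)] at hpair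
  have h2 : Wterm Λ g v2 v1 v1 ≤ F v2 := by
    have inner : Wterm Λ g v2 v1 v1 ≤ ∑ c ∈ latticeBall R, Wterm Λ g v2 v1 c :=
      Finset.single_le_sum (fun c hc => hW v2 (v2_mem hR) v1 (v1_mem hR) c hc) (v1_mem hR)
    have outer : (∑ c ∈ latticeBall R, Wterm Λ g v2 v1 c) ≤ F v2 :=
      Finset.single_le_sum
        (fun b hb => Finset.sum_nonneg fun c hc => hW v2 (v2_mem hR) b hb c hc) (v1_mem hR)
    linarith
  have h1 : Wterm Λ g v1 v2 w1 ≤ F v1 := by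
    have inner : Wterm Λ g v1 v2 w1 ≤ ∑ c ∈ latticeBall R, Wterm Λ g v1 v2 c :=
      Finset.single_le_sum (fun c hc => hW v1 (v1_mem hR) v2 (v2_mem hR) c hc) (w1_mem hR)
    have outer : (∑ c ∈ latticeBall R, Wterm Λ g v1 v2 c) ≤ F v1 :=
      Finset.single_le_sum
        (fun b hb => Finset.sum_nonneg fun c hc => hW v1 (v1_mem hR) b hb c hc) (v2_mem hR)
    linarith
  have hkey := key_pos hΛ g (hg v1 (v1_mem hR)) (hg v2 (v2_mem hR)) (hg w1 (w1_mem hR))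
  calc (0:ℝ) < Wterm Λ g v2 v1 v1 + Wterm Λ g v1 v2 w1 := hkey
    _ ≤ F v2 + F v1 := add_le_add h2 h1
    _ ≤ ∑ a ∈ latticeBall R, F a := hpair

end Pos

section Congr

lemma Wterm_congr {Λ : ℝ} {g g' : (Fin 3 → ℤ) → ℝ} {a b c : Fin 3 → ℤ}
    (ha : g a = g' a) (hb : g b = g' b) (hc : g c = g' c) :
    Wterm Λ g a b c = Wterm Λ g' a b c := by
  unfold Wterm Bq
  rw [ha, hb, hc]

lemma QNR_congr (R Λ : ℝ) (g g' : (Fin 3 → ℤ) → ℝ)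
    (h : ∀ q ∈ latticeBall R, g q = g' q) (p : Fin 3 → ℤ) (hp : p ∈ latticeBall R) :
    QNR R Λ g p = QNR R Λ g' p := by
  unfold QNR
  congr 1
  · refine Finset.sum_congr rfl fun b hb => Finset.sum_congr rfl fun c hc => ?_
    split_ifs with hcond
    · rw [h p hp, h b hb, h c hc]
    · rfl
  · congr 1
    refine Finset.sum_congr rfl fun b hb => Finset.sum_congr rfl fun c hc => ?_
    split_ifs with hcond
    · rw [h p hp, h b hb, h c hc]
    · rfl

end Congr

noncomputable def extendF (R : ℝ) (g : {p // p ∈ latticeBall R} → ℝ) :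
    (Fin 3 → ℤ) → ℝ := fun q => if h : q ∈ latticeBall R then g ⟨q, h⟩ else 0

lemma extendF_mem {R : ℝ} (g : {p // p ∈ latticeBall R} → ℝ) {q : Fin 3 → ℤ}
    (hq : q ∈ latticeBall R) : extendF R g q = g ⟨q, hq⟩ := dif_pos hq

lemma extendF_coord_eq {R : ℝ} {q : Fin 3 → ℤ} (hq : q ∈ latticeBall R) :
    (fun g : {p // p ∈ latticeBall R} → ℝ => extendF R g q)
      = fun g => g ⟨q, hq⟩ := funext fun g => dif_pos hq

lemma continuous_extendF_coord {R : ℝ} (q : Fin 3 → ℤ) :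
    Continuous fun g : {p // p ∈ latticeBall R} → ℝ => extendF R g q := by
  by_cases hq : q ∈ latticeBall R
  · rw [extendF_coord_eq hq]; exact continuous_apply _
  · have : (fun g : {p // p ∈ latticeBall R} → ℝ => extendF R g q) = fun _ => 0 :=
      funext fun g => dif_neg hq
    rw [this]; exact continuous_const

section Cont

variable {R Λ : ℝ}

lemma continuous_QNR_ext (p : Fin 3 → ℤ) :
    Continuous fun g : {p // p ∈ latticeBall R} → ℝ => QNR R Λ (extendF R g) p := by
  unfold QNR
  apply Continuous.sub
  · apply continuous_finset_sum
    intro b _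
    apply continuous_finset_sum
    intro c _
    by_cases h : p = b + c ∧ |enorm3 p - enorm3 b - enorm3 c| ≤ Λ
    · simp only [if_pos h]
      exact continuous_const.mul
        (((continuous_extendF_coord b).mul (continuous_extendF_coord c)).sub
          ((continuous_extendF_coord p).mul
            ((continuous_extendF_coord b).add (continuous_extendF_coord c))))
    · simp only [if_neg h]; exact continuous_const
  · apply Continuous.mul continuous_const
    apply continuous_finset_sum
    intro b _
    apply continuous_finset_sum
    intro c _
    by_cases h : c = p + b ∧ |enorm3 c - enorm3 p - enorm3 b| ≤ Λ
    · simp only [if_pos h]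
      exact continuous_const.mul
        (((continuous_extendF_coord p).mul (continuous_extendF_coord b)).sub
          ((continuous_extendF_coord c).mul
            ((continuous_extendF_coord p).add (continuous_extendF_coord b))))
    · simp only [if_neg h]; exact continuous_const

lemma continuousOn_Wterm_ext {a b c : Fin 3 → ℤ} (ha : a ∈ latticeBall R)
    (hb : b ∈ latticeBall R) (hc : c ∈ latticeBall R) :
    ContinuousOn (fun g : {p // p ∈ latticeBall R} → ℝ => Wterm Λ (extendF R g) a b c)
      {g | ∀ p, g p ≠ 0} := by
  unfold Wterm
  by_cases h : rescond Λ a b c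
  · simp only [if_pos h]
    apply ContinuousOn.div
    · apply Continuous.continuousOn
      apply continuous_const.mul
      apply Continuous.pow
      unfold Bq
      exact ((continuous_extendF_coord b).mul (continuous_extendF_coord c)).sub
        ((continuous_extendF_coord a).mul
          ((continuous_extendF_coord b).add (continuous_extendF_coord c)))
    · exact (((continuous_extendF_coord a).mul (continuous_extendF_coord b)).mul
        (continuous_extendF_coord c)).continuousOn
    · intro g hg
      rw [extendF_mem g ha, extendF_mem g hb, extendF_mem g hc]
      exact mul_ne_zero (mul_ne_zero (hg _) (hg _)) (hg _)
  · simp only [if_neg h]; exact continuousOn_const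

lemma continuousOn_Delta :
    ContinuousOn (fun g : {p // p ∈ latticeBall R} → ℝ =>
      ∑ a ∈ latticeBall R, ∑ b ∈ latticeBall R, ∑ c ∈ latticeBall R,
        Wterm Λ (extendF R g) a b c) {g | ∀ p, g p ≠ 0} := by
  apply continuousOn_finset_sum
  intro a ha
  apply continuousOn_finset_sum
  intro b hb
  apply continuousOn_finset_sum
  intro c hc
  exact continuousOn_Wterm_ext ha hb hc

lemma continuousOn_Phihat :
    ContinuousOn (fun g : {p // p ∈ latticeBall R} → ℝ =>
      ∑ p : {p // p ∈ latticeBall R}, Real.log (g p)) {g | ∀ p, g p ≠ 0} := by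
  apply continuousOn_finset_sum
  intro p _
  intro g hg
  have h1 : ContinuousAt (fun h : {p // p ∈ latticeBall R} → ℝ => h p) g :=
    (continuous_apply p).continuousAt
  have h2 : ContinuousAt Real.log (g p) := Real.continuousAt_log (hg p)
  exact (ContinuousAt.comp (f := fun h : {p // p ∈ latticeBall R} → ℝ => h p) (x := g) h2 h1).continuousWithinAt

end Cont

section Confine

open Set Topology Filter

lemma confine {E : Type*} [NormedAddCommGroup E] [NormedSpace ℝ E]
    (F Fd : ℝ → E) (a τ ε C : ℝ) (hτ : 0 < τ) (hε : 0 < ε) (hC : 0 < C)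
    (hCτ : C * τ < ε)
    (hder : ∀ s ∈ Icc a (a + τ), HasDerivAt F (Fd s) s)
    (hbound : ∀ s ∈ Icc a (a + τ), dist (F s) (F a) ≤ ε → ‖Fd s‖ ≤ C) :
    ∀ u ∈ Icc a (a + τ), dist (F u) (F a) ≤ ε := by
  set S : Set ℝ := {s ∈ Icc a (a + τ) | ∀ u ∈ Icc a s, dist (F u) (F a) ≤ ε} with hS
  have haS : a ∈ S := by
    refine ⟨⟨le_refl a, by linarith⟩, fun u hu => ?_⟩
    have : u = a := le_antisymm hu.2 hu.1
    simp [this, hε.le]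
  have hbdd : BddAbove S := ⟨a + τ, fun s hs => hs.1.2⟩
  set m := sSup S with hm
  have ham : a ≤ m := le_csSup hbdd haS
  have hma : m ≤ a + τ := csSup_le ⟨a, haS⟩ fun s hs => hs.1.2
  have key1 : ∀ u, a ≤ u → u < m → dist (F u) (F a) ≤ ε := by
    intro u h1 h2
    obtain ⟨s, hsS, hus⟩ := exists_lt_of_lt_csSup ⟨a, haS⟩ h2
    exact hsS.2 u ⟨h1, hus.le⟩
  have keym : dist (F m) (F a) ≤ ε := by
    rcases eq_or_lt_of_le ham with h' | h'
    · rw [← h']; simp [hε.le]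
    · have hc : ContinuousAt (fun s => dist (F s) (F a)) m :=
        ((hder m ⟨ham, hma⟩).continuousAt).dist continuousAt_const
      haveI : (𝓝[<] m).NeBot := nhdsLT_neBot m
      refine le_of_tendsto (hc.continuousWithinAt (s := Iio m)) ?_
      filter_upwards [self_mem_nhdsWithin,
        mem_nhdsWithin_of_mem_nhds (isOpen_Ioi.mem_nhds h')] with x hx1 hx2
      exact key1 x (le_of_lt hx2) hx1
  have key2 : ∀ u ∈ Icc a m, dist (F u) (F a) ≤ ε := by
    intro u hu
    rcases lt_or_eq_of_le hu.2 with h | h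
    · exact key1 u hu.1 h
    · rw [h]; exact keym
  have key3 : m = a + τ := by
    by_contra hne
    have hmlt : m < a + τ := lt_of_le_of_ne hma hne
    have hmem' : ∀ s ∈ Icc a m, s ∈ Icc a (a + τ) := fun s hs => ⟨hs.1, le_trans hs.2 hma⟩
    have hmvt := norm_image_sub_le_of_norm_deriv_le_segment'
      (f := F) (f' := Fd) (a := a) (b := m) (C := C)
      (fun x hx => (hder x (hmem' x hx)).hasDerivWithinAt)
      (fun x hx => hbound x (hmem' x ⟨hx.1, hx.2.le⟩) (key2 x ⟨hx.1, hx.2.le⟩))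
    have hstrict : dist (F m) (F a) < ε := by
      have h1 := hmvt m ⟨ham, le_refl m⟩
      rw [dist_eq_norm]
      calc ‖F m - F a‖ ≤ C * (m - a) := h1
        _ ≤ C * τ := by nlinarith
        _ < ε := hCτ
    have hc : ContinuousAt (fun s => dist (F s) (F a)) m :=
      ((hder m ⟨ham, hma⟩).continuousAt).dist continuousAt_const
    have hev : ∀ᶠ x in 𝓝 m, dist (F x) (F a) < ε :=
      hc.eventually_lt continuousAt_const hstrict
    obtain ⟨η, hη, hball⟩ := Metric.eventually_nhds_iff.mp hev
    set m' := min (m + η / 2) (a + τ) with hm'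
    have hmm' : m < m' := lt_min (by linarith) hmlt
    have hm'S : m' ∈ S := by
      refine ⟨⟨by linarith, min_le_right _ _⟩, fun u hu => ?_⟩
      by_cases hum : u ≤ m
      · exact key2 u ⟨hu.1, hum⟩
      · push_neg at hum
        apply le_of_lt
        apply hball
        rw [Real.dist_eq, abs_of_pos (by linarith)]
        have : u ≤ m + η / 2 := le_trans hu.2 (min_le_left _ _)
        linarith
    have : m' ≤ m := le_csSup hbdd hm'S
    linarith
  intro u hu
  exact key2 u (key3 ▸ hu)

lemma mono_aux {Φ D : ℝ → ℝ} {s : Set ℝ} (hconv : Convex ℝ s)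
    (hd : ∀ t ∈ s, HasDerivAt Φ (D t) t) (h0 : ∀ t ∈ interior s, 0 ≤ D t) :
    MonotoneOn Φ s := by
  apply monotoneOn_of_deriv_nonneg hconv
  · exact fun t ht => (hd t ht).continuousAt.continuousWithinAt
  · exact fun t ht =>
      (hd t (interior_subset ht)).differentiableAt.differentiableWithinAt
  · intro t ht
    rw [(hd t (interior_subset ht)).deriv]
    exact h0 t ht

end Confine

end ExitsAux

open ExitsAux

/-- For broadening `Λ ≥ 2` (and `R > 4`), every positive solution of the discrete
near-resonance acoustic kinetic system exits every compact subset of the positive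
orthant: the set of times it spends in any compact `K` is bounded. -/
theorem solution_exits_compacts (R Λ : ℝ) (hR : 4 < R) (hΛ : 2 ≤ Λ)
    (f : ℝ → (Fin 3 → ℤ) → ℝ)
    (hsol : ∀ p ∈ latticeBall R, ∀ t : ℝ, 0 ≤ t →
      HasDerivAt (fun s => f s p) (QNR R Λ (f t) p) t)
    (hpos : ∀ p ∈ latticeBall R, ∀ t : ℝ, 0 ≤ t → 0 < f t p) :
    ∀ K : Set ({p // p ∈ latticeBall R} → ℝ), IsCompact K →
      (∀ g ∈ K, ∀ p, 0 < g p) →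
      ∃ T : ℝ, ∀ t : ℝ, 0 ≤ t →
        (fun p : {p // p ∈ latticeBall R} => f t p.val) ∈ K → t ≤ T := by
  classical
  intro K hK hKpos
  rcases K.eq_empty_or_nonempty with rfl | hKne
  · exact ⟨0, fun t _ ht => absurd ht (Set.notMem_empty _)⟩
  have hv1 : v1 ∈ latticeBall R := v1_mem hR
  haveI : Nonempty {p // p ∈ latticeBall R} := ⟨⟨v1, hv1⟩⟩
  set F : ℝ → {p // p ∈ latticeBall R} → ℝ := fun t p => f t p.val with hFdef
  have hext : ∀ t, ∀ q ∈ latticeBall R, extendF R (F t) q = f t q := fun t q hq => by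
    rw [extendF_mem _ hq]
  set Qhat : ({p // p ∈ latticeBall R} → ℝ) → ({p // p ∈ latticeBall R} → ℝ) :=
    fun g p => QNR R Λ (extendF R g) p.val with hQhatdef
  have hQhatF : ∀ t, Qhat (F t) = fun p : {p // p ∈ latticeBall R} =>
      QNR R Λ (f t) p.val :=
    fun t => funext fun p => QNR_congr R Λ _ _ (hext t) p.val p.2
  have hFd : ∀ t, 0 ≤ t → HasDerivAt F (Qhat (F t)) t := by
    intro t ht
    rw [hQhatF t]
    apply hasDerivAt_pi.mpr
    intro p
    exact hsol p.val p.2 t ht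
  set Φ : ℝ → ℝ := fun t => ∑ p ∈ latticeBall R, Real.log (f t p) with hΦdef
  set Phat : ({p // p ∈ latticeBall R} → ℝ) → ℝ :=
    fun g => ∑ p : {p // p ∈ latticeBall R}, Real.log (g p) with hPhatdef
  have hΦF : ∀ t, Φ t = Phat (F t) := fun t =>
    (Finset.sum_coe_sort (latticeBall R) (fun q => Real.log (f t q))).symm
  set Dfun : ℝ → ℝ := fun t => ∑ a ∈ latticeBall R, ∑ b ∈ latticeBall R,
    ∑ c ∈ latticeBall R, Wterm Λ (f t) a b c with hDfundef
  have hΦd : ∀ t, 0 ≤ t → HasDerivAt Φ (Dfun t) t := by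
    intro t ht
    have h1 : HasDerivAt Φ (∑ p ∈ latticeBall R, QNR R Λ (f t) p / f t p) t := by
      apply HasDerivAt.fun_sum
      intro p hp
      exact (hsol p hp t ht).log (hpos p hp t ht).ne'
    have h2 : (∑ p ∈ latticeBall R, QNR R Λ (f t) p / f t p) = Dfun t :=
      sum_QNR_div R Λ (f t) (fun p hp => (hpos p hp t ht).ne')
    rwa [h2] at h1
  have hDnonneg : ∀ t, 0 ≤ t → 0 ≤ Dfun t := by
    intro t ht
    apply Finset.sum_nonneg; intro a ha
    apply Finset.sum_nonneg; intro b hb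
    apply Finset.sum_nonneg; intro c hc
    exact Wterm_nonneg (hpos a ha t ht).le (hpos b hb t ht).le (hpos c hc t ht).le
  have hmono : MonotoneOn Φ (Set.Ici 0) :=
    mono_aux (convex_Ici 0) (fun t ht => hΦd t ht)
      (fun t ht => hDnonneg t (le_of_lt (by rwa [interior_Ici] at ht)))
  set Dhat : ({p // p ∈ latticeBall R} → ℝ) → ℝ := fun g =>
    ∑ a ∈ latticeBall R, ∑ b ∈ latticeBall R, ∑ c ∈ latticeBall R,
      Wterm Λ (extendF R g) a b c with hDhatdef
  have hDF : ∀ t, Dfun t = Dhat (F t) := by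
    intro t
    refine Finset.sum_congr rfl fun a ha => Finset.sum_congr rfl fun b hb =>
      Finset.sum_congr rfl fun c hc => ?_
    exact Wterm_congr (hext t a ha).symm (hext t b hb).symm (hext t c hc).symm
  -- uniform positive lower bound on K
  have hcoordmin : ∃ e : ℝ, 0 < e ∧ ∀ g ∈ K, ∀ p, e ≤ g p := by
    choose gm hgmK hgm using fun p : {p // p ∈ latticeBall R} =>
      hK.exists_isMinOn hKne ((continuous_apply p).continuousOn (s := K))
    refine ⟨Finset.univ.inf' Finset.univ_nonempty (fun p => gm p p), ?_, ?_⟩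
    · rw [Finset.lt_inf'_iff]
      exact fun p _ => hKpos (gm p) (hgmK p) p
    · intro g hg p
      exact le_trans (Finset.inf'_le _ (Finset.mem_univ p)) (hgm p hg)
  obtain ⟨e, he, hemin⟩ := hcoordmin
  set ε := e / 2 with hεdef
  have hεpos : 0 < ε := by positivity
  set K' := Metric.cthickening ε K with hK'def
  have hK'c : IsCompact K' := hK.cthickening
  have hKK' : K ⊆ K' := Metric.self_subset_cthickening K
  have hK'ne : K'.Nonempty := hKne.mono hKK'
  have hK'pos : ∀ g ∈ K', ∀ p, ε ≤ g p := by
    intro g hg p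
    rw [hK'def, hK.cthickening_eq_biUnion_closedBall hεpos.le] at hg
    obtain ⟨y, hyK, hy⟩ := Set.mem_iUnion₂.mp hg
    have hd : dist g y ≤ ε := Metric.mem_closedBall.mp hy
    have hdc : dist (g p) (y p) ≤ ε := le_trans (dist_le_pi_dist g y p) hd
    have habs : |g p - y p| ≤ ε := by rwa [Real.dist_eq] at hdc
    have h2e : e ≤ y p := hemin y hyK p
    have := (abs_le.mp habs).1
    rw [hεdef] at *
    linarith
  have hKU : K ⊆ {g : {p // p ∈ latticeBall R} → ℝ | ∀ p, g p ≠ 0} :=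
    fun g hg p => (hKpos g hg p).ne'
  have hK'U : K' ⊆ {g : {p // p ∈ latticeBall R} → ℝ | ∀ p, g p ≠ 0} :=
    fun g hg p => (lt_of_lt_of_le hεpos (hK'pos g hg p)).ne'
  -- bound on the vector field over K'
  have hQcont : Continuous Qhat := continuous_pi fun p => continuous_QNR_ext p.val
  obtain ⟨g0, _, hg0max⟩ := hK'c.exists_isMaxOn hK'ne hQcont.norm.continuousOn
  set C := max ‖Qhat g0‖ 1 with hCdef
  have hCpos : (0:ℝ) < C := lt_of_lt_of_le one_pos (le_max_right _ _)
  have hCbound : ∀ g ∈ K', ‖Qhat g‖ ≤ C := fun g hg =>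
    le_trans (hg0max hg) (le_max_left _ _)
  -- lower bound on the entropy production over K'
  obtain ⟨g1, hg1, hg1min⟩ := hK'c.exists_isMinOn hK'ne (continuousOn_Delta.mono hK'U)
  set δ := Dhat g1 with hδdef
  have hδpos : 0 < δ :=
    triple_sum_pos hR hΛ (extendF R g1) (fun p hp => by
      rw [extendF_mem _ hp]
      exact lt_of_lt_of_le hεpos (hK'pos g1 hg1 ⟨p, hp⟩))
  have hδmin : ∀ g ∈ K', δ ≤ Dhat g := fun g hg => hg1min hg
  -- upper bound of entropy on K
  obtain ⟨g2, _, hg2max⟩ := hK.exists_isMaxOn hKne (continuousOn_Phihat.mono hKU)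
  set M := Phat g2 with hMdef
  have hM : ∀ g ∈ K, Phat g ≤ M := fun g hg => hg2max hg
  -- time step
  set τ := ε / (2 * C) with hτdef
  have hτpos : 0 < τ := div_pos hεpos (by linarith)
  have hCτ : C * τ < ε := by
    rw [hτdef]
    rw [show C * (ε / (2 * C)) = ε / 2 by field_simp]
    linarith
  -- confinement
  have hstay : ∀ t₀, 0 ≤ t₀ → F t₀ ∈ K → ∀ u ∈ Set.Icc t₀ (t₀ + τ), F u ∈ K' := by
    intro t₀ ht₀ hmem
    have hconf := confine F (fun s => Qhat (F s)) t₀ τ ε C hτpos hεpos hCpos hCτ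
      (fun s hs => hFd s (le_trans ht₀ hs.1))
      (fun s hs hd => hCbound (F s)
        (Metric.mem_cthickening_of_dist_le (F s) (F t₀) ε K hmem hd))
    intro u hu
    exact Metric.mem_cthickening_of_dist_le (F u) (F t₀) ε K hmem (hconf u hu)
  -- entropy growth after visiting K
  have hgrow : ∀ t₀, 0 ≤ t₀ → F t₀ ∈ K → Φ t₀ + δ * τ ≤ Φ (t₀ + τ) := by
    intro t₀ ht₀ hmem
    have hmono2 : MonotoneOn (fun s => Φ s - δ * s) (Set.Icc t₀ (t₀ + τ)) := by
      apply mono_aux (convex_Icc _ _) (D := fun s => Dfun s - δ)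
      · intro s hs
        have h1 := hΦd s (le_trans ht₀ hs.1)
        have h2 : HasDerivAt (fun s : ℝ => δ * s) δ s := by
          simpa using (hasDerivAt_id s).const_mul δ
        exact h1.sub h2
      · intro s hs
        rw [interior_Icc] at hs
        have hsK' : F s ∈ K' := hstay t₀ ht₀ hmem s ⟨hs.1.le, hs.2.le⟩
        have : δ ≤ Dfun s := by rw [hDF s]; exact hδmin (F s) hsK'
        linarith
    have := hmono2 ⟨le_refl _, by linarith⟩
      ⟨by linarith, le_refl _⟩ (by linarith)
    simp only at this
    linarith
  -- conclusion by contradiction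
  by_contra hcon
  push_neg at hcon
  choose tn htn0 htnK htnlt using hcon
  set seq : ℕ → ℝ := fun n => Nat.rec (tn 0) (fun _ prev => tn (prev + τ)) n with hseqdef
  have hseqS : ∀ n, seq (n + 1) = tn (seq n + τ) := fun n => rfl
  have hs0 : ∀ n, 0 ≤ seq n := by
    intro n
    cases n with
    | zero => exact htn0 0
    | succ n => rw [hseqS]; exact htn0 _
  have hsK : ∀ n, F (seq n) ∈ K := by
    intro n
    cases n with
    | zero => exact htnK 0
    | succ n => rw [hseqS]; exact htnK _
  have hslt : ∀ n, seq n + τ < seq (n + 1) := fun n => by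
    rw [hseqS]; exact htnlt (seq n + τ)
  have hΦn : ∀ n : ℕ, Φ (seq 0) + n * (δ * τ) ≤ Φ (seq n) := by
    intro n
    induction n with
    | zero => simp
    | succ n ih =>
      have h1 := hgrow (seq n) (hs0 n) (hsK n)
      have h2 : Φ (seq n + τ) ≤ Φ (seq (n + 1)) :=
        hmono (Set.mem_Ici.mpr (by linarith [hs0 n])) (Set.mem_Ici.mpr (hs0 (n + 1)))
          (le_of_lt (hslt n))
      push_cast
      linarith
  have hub : ∀ n, Φ (seq n) ≤ M := fun n => by
    rw [hΦF]; exact hM _ (hsK n)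
  obtain ⟨n, hn⟩ := exists_nat_gt ((M - Φ (seq 0)) / (δ * τ))
  have hδτ : 0 < δ * τ := mul_pos hδpos hτpos
  rw [div_lt_iff₀ hδτ] at hn
  linarith [hΦn n, hub n]
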